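/- If X and Y are minimal finite spaces and f : X → Y is a homotopy equivalence, then f is a homeomorphism. -/

import Mathlib

/-- The minimal open set containing `x`: the intersection of all open sets containing `x`. -/
def minOpen {X : Type*} [TopologicalSpace X] (x : X) : Set X :=
  ⋂₀ {U : Set X | IsOpen U ∧ x ∈ U}

/-- The specialization order: `x ≤ y` iff `U_x ⊆ U_y`. -/
def sle {X : Type*} [TopologicalSpace X] (x y : X) : Prop := minOpen x ⊆ minOpen y

/-- Strict specialization order. -/
def slt {X : Type*} [TopologicalSpace X] (x y : X) : Prop := sle x y ∧ x ≠ y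

/-- A point `x` is up-beat if there is `y > x` such that every `z > x` satisfies `z ≥ y`. -/
def UpBeat {X : Type*} [TopologicalSpace X] (x : X) : Prop :=
  ∃ y : X, slt x y ∧ ∀ z : X, slt x z → sle y z

/-- A point `x` is down-beat if there is `y < x` such that every `z < x` satisfies `z ≤ y`. -/
def DownBeat {X : Type*} [TopologicalSpace X] (x : X) : Prop :=
  ∃ y : X, slt y x ∧ ∀ z : X, slt z x → sle z y

/-- A minimal finite space: a finite T0 space with no up-beat and no down-beat points. -/
def IsMinimalFiniteSpace (X : Type*) [TopologicalSpace X] : Prop :=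
  Finite X ∧ T0Space X ∧ ∀ x : X, ¬ UpBeat x ∧ ¬ DownBeat x

section Aux

variable {X Y : Type*} [TopologicalSpace X] [TopologicalSpace Y]

lemma mem_minOpen (x : X) : x ∈ minOpen x := fun _ hU => hU.2

lemma minOpen_isOpen [Finite X] (x : X) : IsOpen (minOpen x) :=
  Set.Finite.isOpen_sInter (Set.toFinite _) (fun _ hU => hU.1)

lemma minOpen_subset {U : Set X} (hU : IsOpen U) {x : X} (hx : x ∈ U) :
    minOpen x ⊆ U := Set.sInter_subset_of_mem ⟨hU, hx⟩

lemma sle_iff_mem [Finite X] {x y : X} : sle x y ↔ x ∈ minOpen y :=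
  ⟨fun h => h (mem_minOpen x), fun h => minOpen_subset (minOpen_isOpen y) h⟩

lemma sle_refl (x : X) : sle x x := subset_rfl

lemma sle_antisymm [T0Space X] {x y : X} (h1 : sle x y) (h2 : sle y x) : x = y := by
  have : Inseparable x y := by
    rw [inseparable_iff_forall_isOpen]
    intro U hU
    exact ⟨fun hx => h2 (mem_minOpen y) U ⟨hU, hx⟩,
           fun hy => h1 (mem_minOpen x) U ⟨hU, hy⟩⟩
  exact this.eq

lemma sle_map [Finite Y] (f : C(X, Y)) {x' x : X} (h : sle x' x) :
    sle (f x') (f x) := by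
  rw [sle_iff_mem]
  have hpre : IsOpen (f ⁻¹' (minOpen (f x))) := (minOpen_isOpen (f x)).preimage f.continuous
  have : minOpen x ⊆ f ⁻¹' (minOpen (f x)) := minOpen_subset hpre (mem_minOpen (f x))
  exact this (h (mem_minOpen x'))

/-- Key lemma: in a minimal finite space, a continuous map pointwise below the identity is the
identity. -/
lemma eq_id_of_sle_id (hX : IsMinimalFiniteSpace X) (f : C(X, X))
    (hf : ∀ x, sle (f x) x) : ∀ x, f x = x := by
  obtain ⟨hfin, ht0, hbeat⟩ := hX
  haveI := hfin; haveI := ht0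
  by_contra hne
  push_neg at hne
  obtain ⟨x, hxS, hmin⟩ := Set.Finite.exists_minimalFor minOpen {x : X | f x ≠ x}
    (Set.toFinite _) hne
  refine (hbeat x).2 ⟨f x, ⟨hf x, hxS⟩, ?_⟩
  intro z hz
  have hz' : f z = z := by
    by_contra hzS
    have := hmin hzS (hz.1)
    exact hz.2 (sle_antisymm hz.1 this)
  have := sle_map f hz.1
  rwa [hz'] at this

/-- Dual key lemma. -/
lemma eq_id_of_id_sle (hX : IsMinimalFiniteSpace X) (f : C(X, X))
    (hf : ∀ x, sle x (f x)) : ∀ x, f x = x := by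
  obtain ⟨hfin, ht0, hbeat⟩ := hX
  haveI := hfin; haveI := ht0
  by_contra hne
  push_neg at hne
  obtain ⟨x, hxS, hmax⟩ := Set.Finite.exists_maximalFor minOpen {x : X | f x ≠ x}
    (Set.toFinite _) hne
  refine (hbeat x).1 ⟨f x, ⟨hf x, fun e => hxS e.symm⟩, ?_⟩
  intro z hz
  have hz' : f z = z := by
    by_contra hzS
    have := hmax hzS (hz.1)
    exact hz.2 (sle_antisymm hz.1 this)
  have := sle_map f hz.1
  rwa [hz'] at this

/-- The time-`t` hslice of a continuous map on `I × X`. -/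
def hslice (H : C(unitInterval × X, X)) (t : unitInterval) : C(X, X) :=
  ⟨fun x => H (t, x), H.continuous.comp (continuous_const.prodMk continuous_id)⟩

lemma hslice_nbhd (hfin : Finite X) (H : C(unitInterval × X, X)) (t0 : unitInterval) :
    ∃ V : Set unitInterval, IsOpen V ∧ t0 ∈ V ∧
      ∀ t ∈ V, ∀ x : X, H (t, x) ∈ minOpen (H (t0, x)) := by
  haveI := hfin
  refine ⟨⋂ x : X, {t | H (t, x) ∈ minOpen (H (t0, x))}, ?_, ?_, ?_⟩
  · refine isOpen_iInter_of_finite fun x => ?_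
    have : Continuous fun t : unitInterval => H (t, x) :=
      H.continuous.comp (continuous_id.prodMk continuous_const)
    exact (minOpen_isOpen (H (t0, x))).preimage this
  · exact Set.mem_iInter.2 fun x => mem_minOpen _
  · intro t ht x
    exact Set.mem_iInter.1 ht x

/-- Homotopy rigidity: a self-map of a minimal finite space homotopic to the identity is the
identity. -/
lemma eq_id_of_homotopic_id (hX : IsMinimalFiniteSpace X) (F : C(X, X))
    (h : F.Homotopic (ContinuousMap.id X)) : ∀ x, F x = x := by
  haveI hfin := hX.1
  obtain ⟨H⟩ := h
  set A : Set unitInterval := {t | ∀ x, H (t, x) = x} with hA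
  have hopen : IsOpen A := by
    rw [isOpen_iff_forall_mem_open]
    intro t0 ht0
    obtain ⟨V, hV, ht0V, hVprop⟩ := hslice_nbhd hfin H.toContinuousMap t0
    refine ⟨V, ?_, hV, ht0V⟩
    intro t ht
    intro x
    have : ∀ x, sle (hslice H.toContinuousMap t x) x := by
      intro x
      rw [sle_iff_mem]
      have h1 := hVprop t ht x
      have h0 : H.toContinuousMap (t0, x) = x := ht0 x
      rw [h0] at h1
      exact h1
    exact eq_id_of_sle_id hX (hslice H.toContinuousMap t) this x
  have hclosed : IsClosed A := by
    refine isClosed_of_closure_subset ?_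
    intro t0 ht0
    obtain ⟨V, hV, ht0V, hVprop⟩ := hslice_nbhd hfin H.toContinuousMap t0
    obtain ⟨t, htV, htA⟩ := mem_closure_iff.1 ht0 V hV ht0V
    intro x
    have : ∀ x, sle x (hslice H.toContinuousMap t0 x) := by
      intro x
      rw [sle_iff_mem]
      have h1 := hVprop t htV x
      have h0 : H.toContinuousMap (t, x) = x := htA x
      rw [h0] at h1
      exact h1
    exact eq_id_of_id_sle hX (hslice H.toContinuousMap t0) this x
  have hne : A.Nonempty := ⟨1, fun x => H.apply_one x⟩
  have : A = Set.univ := (IsClopen.eq_univ ⟨hclosed, hopen⟩ hne)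
  intro x
  have h0 : (0 : unitInterval) ∈ A := this ▸ Set.mem_univ _
  have := h0 x
  rwa [H.apply_zero x] at this

end Aux

/-- A homotopy equivalence between minimal finite spaces is a homeomorphism. -/
theorem isHomeomorph_of_homotopyEquiv {X Y : Type*} [TopologicalSpace X] [TopologicalSpace Y]
    (hX : IsMinimalFiniteSpace X) (hY : IsMinimalFiniteSpace Y) (f : C(X, Y))
    (h : ∃ g : C(Y, X), (g.comp f).Homotopic (ContinuousMap.id X) ∧
      (f.comp g).Homotopic (ContinuousMap.id Y)) :
    IsHomeomorph f := by
  obtain ⟨g, hgf, hfg⟩ := h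
  have h1 : ∀ x, g (f x) = x := eq_id_of_homotopic_id hX (g.comp f) hgf
  have h2 : ∀ y, f (g y) = y := eq_id_of_homotopic_id hY (f.comp g) hfg
  rw [isHomeomorph_iff_exists_inverse]
  exact ⟨f.continuous, g, h1, h2, g.continuous⟩
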